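/- For every natural number n ≥ 3, the degree over ℚ of the subfield of ℂ generated over ℚ by i·cos(π/n) equals 2 if and only if n ∈ {3, 4, 6}. -/

import Mathlib

open Polynomial Real

/-- The invariant trace field `K n`: the subfield of `ℂ` generated over `ℚ`
by `i * cos (π / n)`. -/
noncomputable def pretzelTraceField (n : ℕ) : IntermediateField ℚ ℂ :=
  IntermediateField.adjoin ℚ {Complex.I * (Real.cos (Real.pi / n) : ℂ)}

private lemma cos_pos_aux {n : ℕ} (hn : 3 ≤ n) : 0 < Real.cos (π / n) := by
  have hn0 : (0:ℝ) < n := by positivity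
  have hn3 : (3:ℝ) ≤ n := by exact_mod_cast hn
  have hπ := Real.pi_pos
  apply Real.cos_pos_of_mem_Ioo
  constructor
  · have : (0:ℝ) < π / n := by positivity
    linarith
  · have h1 : π / n ≤ π / 3 := by
      rw [div_le_div_iff₀ hn0 (by norm_num)]
      nlinarith
    linarith [h1]

private lemma z_not_range {n : ℕ} (hn : 3 ≤ n) :
    Complex.I * (Real.cos (π / n) : ℂ) ∉ (algebraMap ℚ ℂ).range := by
  rintro ⟨q, hq⟩
  have him : (Complex.I * (Real.cos (π / n) : ℂ)).im = Real.cos (π / n) := by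
    simp only [Complex.mul_im, Complex.I_re, Complex.I_im, Complex.ofReal_re,
      Complex.ofReal_im]
    ring
  rw [← hq, eq_ratCast (algebraMap ℚ ℂ) q, Complex.ratCast_im] at him
  exact absurd him.symm (ne_of_gt (cos_pos_aux hn))

/-- If `cos(π/n)^2` is rational, the degree is 2. -/
private lemma finrank_eq_two_of_rat {n : ℕ} (hn : 3 ≤ n) (q : ℚ)
    (hq : (q : ℝ) = Real.cos (π / n) ^ 2) :
    Module.finrank ℚ (pretzelTraceField n) = 2 := by
  set z : ℂ := Complex.I * (Real.cos (π / n) : ℂ) with hz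
  have hzsq : z ^ 2 = -(q : ℂ) := by
    have : ((q : ℝ) : ℂ) = ((Real.cos (π / n) : ℂ)) ^ 2 := by
      rw [hq]; push_cast; ring
    rw [hz]
    push_cast at this ⊢
    rw [mul_pow, Complex.I_sq, ← this]
    ring
  have haev : (Polynomial.aeval z) (X ^ 2 + C q) = 0 := by
    simp [hzsq]
  have hmonic : (X ^ 2 + C q).Monic := monic_X_pow_add_C q (by norm_num)
  have hint : IsIntegral ℚ z := ⟨X ^ 2 + C q, hmonic, haev⟩
  have hfr : Module.finrank ℚ (pretzelTraceField n) = (minpoly ℚ z).natDegree := by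
    rw [pretzelTraceField]
    exact IntermediateField.adjoin.finrank hint
  rw [hfr]
  have hle : (minpoly ℚ z).natDegree ≤ 2 := by
    have := minpoly.degree_le_of_ne_zero ℚ z (hmonic.ne_zero) haev
    have hdeg : (X ^ 2 + C q : ℚ[X]).natDegree = 2 :=
      Polynomial.natDegree_X_pow_add_C
    calc (minpoly ℚ z).natDegree ≤ (X ^ 2 + C q : ℚ[X]).natDegree :=
          Polynomial.natDegree_le_natDegree this
      _ = 2 := hdeg
  have hge : 2 ≤ (minpoly ℚ z).natDegree :=
    (minpoly.two_le_natDegree_iff hint).mpr (z_not_range hn)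
  omega

/-- If the degree is 2, then `cos(π/n)^2` is rational. -/
private lemma rat_of_finrank_eq_two {n : ℕ} (hn : 3 ≤ n)
    (h : Module.finrank ℚ (pretzelTraceField n) = 2) :
    ∃ q : ℚ, (q : ℝ) = Real.cos (π / n) ^ 2 := by
  set c : ℝ := Real.cos (π / n) with hc
  set z : ℂ := Complex.I * (c : ℂ) with hz
  have hfd : FiniteDimensional ℚ (pretzelTraceField n) :=
    Module.finite_of_finrank_pos (by omega)
  have hmem : z ∈ pretzelTraceField n := by
    rw [pretzelTraceField]
    exact IntermediateField.mem_adjoin_simple_self ℚ z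
  have hint : IsIntegral ℚ z := by
    have h1 : IsIntegral ℚ (⟨z, hmem⟩ : pretzelTraceField n) :=
      IsIntegral.of_finite ℚ _
    have h2 := h1.map (IsScalarTower.toAlgHom ℚ (pretzelTraceField n) ℂ)
    simpa using h2
  have hfr : (minpoly ℚ z).natDegree = 2 := by
    rw [pretzelTraceField] at h
    rw [← IntermediateField.adjoin.finrank hint, ← h]
  -- expand aeval
  have haev : (Polynomial.aeval z) (minpoly ℚ z) = 0 := minpoly.aeval ℚ z
  rw [Polynomial.aeval_eq_sum_range, hfr] at haev
  have hlead : (minpoly ℚ z).coeff 2 = 1 := by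
    have := (minpoly.monic hint).coeff_natDegree
    rwa [hfr] at this
  rw [Finset.sum_range_succ, Finset.sum_range_succ, Finset.sum_range_succ,
    Finset.sum_range_zero, hlead] at haev
  set c0 : ℚ := (minpoly ℚ z).coeff 0
  set c1 : ℚ := (minpoly ℚ z).coeff 1
  have heq : (c0 : ℂ) + (c1 : ℂ) * z + z ^ 2 = 0 := by
    have : (0:ℂ) + c0 • z ^ 0 + c1 • z ^ 1 + (1:ℚ) • z ^ 2 = 0 := haev
    simpa [Rat.smul_def] using this
  have hzsq : z ^ 2 = ((-(c^2) : ℝ) : ℂ) := by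
    rw [hz, mul_pow, Complex.I_sq]
    push_cast
    ring
  rw [hzsq, hz] at heq
  rw [Complex.ext_iff] at heq
  obtain ⟨hre, him⟩ := heq
  simp only [Complex.add_im, Complex.add_re, Complex.mul_im, Complex.mul_re,
    Complex.I_re, Complex.I_im, Complex.ofReal_re, Complex.ofReal_im,
    Complex.ratCast_re, Complex.ratCast_im, Complex.zero_re, Complex.zero_im] at hre him
  have hcne : c ≠ 0 := ne_of_gt (cos_pos_aux hn)
  have hc10 : (c1 : ℝ) = 0 := by
    rcases mul_eq_zero.mp (by linarith [him] : (c1 : ℝ) * c = 0) with h' | h'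
    · exact h'
    · exact absurd h' hcne
  refine ⟨c0, ?_⟩
  rw [hc10] at hre
  nlinarith [hre]

/-- Niven: if `cos(π/n)^2` is rational then `n ∈ {3,4,6}`. -/
private lemma niven_aux {n : ℕ} (hn : 3 ≤ n) (q : ℚ)
    (hq : (q : ℝ) = Real.cos (π / n) ^ 2) :
    n = 3 ∨ n = 4 ∨ n = 6 := by
  have hn0 : (n:ℝ) ≠ 0 := by positivity
  have hnC : (n:ℂ) ≠ 0 := by exact_mod_cast (show (n:ℝ) ≠ 0 from hn0)
  set θ : ℝ := 2 * (π / n) with hθ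
  have hcos2 : ((2 * q - 1 : ℚ) : ℝ) = Real.cos θ := by
    rw [hθ, Real.cos_two_mul, ← hq]; push_cast; ring
  set r : ℚ := 2 * (2 * q - 1) with hr
  -- 2 cos θ = exp(θ I) + exp(-θ I), sum of integral elements
  have hu : Complex.exp ((θ:ℝ) * Complex.I) ^ n = 1 := by
    rw [← Complex.exp_nat_mul]
    have : (n:ℂ) * ((θ:ℝ) * Complex.I) = 2 * π * Complex.I := by
      rw [hθ]; push_cast; field_simp
    rw [this, Complex.exp_two_pi_mul_I]
  have hv : Complex.exp (((-θ:ℝ)) * Complex.I) ^ n = 1 := by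
    rw [← Complex.exp_nat_mul]
    have : (n:ℂ) * (((-θ:ℝ)) * Complex.I) = (-1 : ℤ) * (2 * π * Complex.I) := by
      rw [hθ]; push_cast; field_simp
    rw [this, Complex.exp_int_mul_two_pi_mul_I]
  have hint : ∀ w : ℂ, w ^ n = 1 → IsIntegral ℤ w := by
    intro w hw
    refine ⟨X ^ n - C 1, monic_X_pow_sub_C 1 (by omega), ?_⟩
    simp [hw]
  have hsum : IsIntegral ℤ
      (Complex.exp ((θ:ℝ) * Complex.I) + Complex.exp (((-θ:ℝ)) * Complex.I)) :=
    (hint _ hu).add (hint _ hv)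
  have hcast : ((r : ℚ) : ℂ) =
      Complex.exp ((θ:ℝ) * Complex.I) + Complex.exp (((-θ:ℝ)) * Complex.I) := by
    rw [Complex.exp_mul_I, Complex.exp_mul_I, Complex.ofReal_neg, Complex.cos_neg,
      Complex.sin_neg, ← Complex.ofReal_cos, ← Complex.ofReal_sin, ← hcos2, hr]
    push_cast
    ring
  rw [← hcast] at hsum
  have hintq : IsIntegral ℤ r := by
    have hinj : Function.Injective (algebraMap ℚ ℂ) := (algebraMap ℚ ℂ).injective
    exact (isIntegral_algebraMap_iff hinj).mp (by simpa using hsum)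
  obtain ⟨m, hm⟩ := IsIntegrallyClosed.isIntegral_iff.mp hintq
  -- now (m : ℝ) = 2 cos θ with θ ∈ (0, 2π/3]
  have hmr : (m : ℝ) = 2 * Real.cos θ := by
    rw [← hcos2]
    have h1 : ((m:ℚ):ℝ) = ((r:ℚ):ℝ) := by
      rw [show ((m:ℚ)) = r by exact_mod_cast hm]
    rw [hr] at h1
    push_cast at h1 ⊢
    linarith
  have hθpos : 0 < θ := by
    rw [hθ]; positivity
  have hnpos : (0:ℝ) < n := by positivity
  have hθle : θ ≤ 2 * π / 3 := by
    have h3 : (3:ℝ) ≤ n := by exact_mod_cast hn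
    have h1 : π / n ≤ π / 3 := by
      rw [div_le_div_iff₀ hnpos (by norm_num)]
      nlinarith [Real.pi_pos]
    rw [hθ]; linarith
  have hθltπ : θ < π := by
    have := Real.pi_pos
    linarith
  have hθmem : θ ∈ Set.Icc 0 π := ⟨hθpos.le, hθltπ.le⟩
  have hcos_lt : Real.cos θ < 1 := by
    have := Real.strictAntiOn_cos (Set.mem_Icc.mpr ⟨le_refl 0, Real.pi_pos.le⟩) hθmem hθpos
    simpa using this
  have hcos_ge : -(1/2 : ℝ) ≤ Real.cos θ := by
    have h23 : Real.cos (2 * π / 3) = -(1/2) := by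
      have : (2:ℝ) * π / 3 = π - π / 3 := by ring
      rw [this, Real.cos_pi_sub, Real.cos_pi_div_three]
    have h23mem : (2 * π / 3 : ℝ) ∈ Set.Icc 0 π := by
      constructor
      · positivity
      · nlinarith [Real.pi_pos]
    rcases eq_or_lt_of_le hθle with h' | h'
    · exact le_of_eq (by rw [h', h23])
    · have := Real.strictAntiOn_cos hθmem h23mem h'
      linarith [this]
  have hm_lb : (-1 : ℤ) ≤ m := by
    have : (-1 : ℝ) ≤ (m:ℝ) := by rw [hmr]; linarith
    exact_mod_cast this
  have hm_ub : m < 2 := by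
    have : (m:ℝ) < 2 := by rw [hmr]; linarith
    exact_mod_cast this
  -- determine n from cos θ = m / 2
  have key : ∀ α : ℝ, α ∈ Set.Icc (0:ℝ) π → Real.cos θ = Real.cos α → θ = α := by
    intro α hα hcosα
    exact Real.injOn_cos hθmem hα hcosα
  have nval : ∀ k : ℝ, 0 < k → θ = 2 * (π / k) → (n:ℝ) = k := by
    intro k hk he
    rw [hθ] at he
    have h1 : π / (n:ℝ) = π / k := by linarith
    rw [div_eq_div_iff hnpos.ne' hk.ne'] at h1
    exact mul_left_cancel₀ Real.pi_ne_zero (by linarith : π * (n:ℝ) = π * k)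
  interval_cases m
  · -- cos θ = -1/2, θ = 2π/3, n = 3
    left
    push_cast at hmr
    have hθeq : θ = 2 * π / 3 := by
      apply key
      · exact ⟨by positivity, by nlinarith [Real.pi_pos]⟩
      · rw [show Real.cos (2 * π / 3) = -(1/2) by
          rw [show (2:ℝ) * π / 3 = π - π / 3 by ring, Real.cos_pi_sub,
            Real.cos_pi_div_three]]
        linarith
    have : (n : ℝ) = 3 := nval 3 (by norm_num) (by rw [hθeq]; ring)
    exact_mod_cast this
  · -- cos θ = 0, θ = π/2, n = 4
    right; left
    push_cast at hmr
    have hθeq : θ = π / 2 := by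
      apply key
      · exact ⟨by positivity, by linarith [Real.pi_pos]⟩
      · rw [Real.cos_pi_div_two]; linarith
    have : (n : ℝ) = 4 := nval 4 (by norm_num) (by rw [hθeq]; ring)
    exact_mod_cast this
  · -- cos θ = 1/2, θ = π/3, n = 6
    right; right
    push_cast at hmr
    have hθeq : θ = π / 3 := by
      apply key
      · exact ⟨by positivity, by linarith [Real.pi_pos]⟩
      · rw [Real.cos_pi_div_three]; linarith
    have : (n : ℝ) = 6 := nval 6 (by norm_num) (by rw [hθeq]; ring)
    exact_mod_cast this

theorem finrank_pretzelTraceField_eq_two_iff (n : ℕ) (hn : 3 ≤ n) :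
    Module.finrank ℚ (pretzelTraceField n) = 2 ↔ n = 3 ∨ n = 4 ∨ n = 6 := by
  constructor
  · intro h
    obtain ⟨q, hq⟩ := rat_of_finrank_eq_two hn h
    exact niven_aux hn q hq
  · rintro (rfl | rfl | rfl)
    · exact finrank_eq_two_of_rat (by norm_num) (1/4)
        (by rw [show ((3:ℕ):ℝ) = 3 by norm_num, Real.cos_pi_div_three]; norm_num)
    · exact finrank_eq_two_of_rat (by norm_num) (1/2)
        (by rw [show ((4:ℕ):ℝ) = 4 by norm_num, Real.cos_pi_div_four, div_pow,
              Real.sq_sqrt (by norm_num : (2:ℝ) ≥ 0)]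
            norm_num)
    · exact finrank_eq_two_of_rat (by norm_num) (3/4)
        (by rw [show ((6:ℕ):ℝ) = 6 by norm_num, Real.sq_cos_pi_div_six]; norm_num)
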